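/- arXiv:1808.03269 — 3 statements merged into one kernel-verified Lean document; each statement's English description precedes it below -/
import Mathlib

section
/- Let d ≥ 1, 0 < α < min(2,d), r > 1 and set q := (2r−1)/r. Let Ω ⊆ ℝ^d be a measurable set of finite Lebesgue measure |Ω|, let w, f, S : ℝ^d → [0,∞) be measurable functions vanishing outside Ω, and let λ₀, C_S, C_H, C₀ > 0 be constants. Set B := Γ_w[f] + ∫ S f² w² dx and assume B < ∞ as well as: (i) (Sobolev inequality) (∫ (w f)^{2r} dx)^{1/r} ≤ C_S · B; (ii) (weighted L² estimate) ∫ f² dx ≤ C_H C₀ ( Γ_w[f] + λ₀ ∫ w² f² dx ). Then (∫ f^{2q} w² dx)^{1/q} ≤ A · B, where A := (C₀ C_H + C_S)(1 + λ₀ C_S |Ω|^{1−1/r}). -/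
open MeasureTheory ENNReal

/-- The normalizing constant `A(d,α)` of the fractional Laplacian. -/
noncomputable def Ada (d : ℕ) (α : ℝ) : ℝ :=
  α * Real.Gamma (((d : ℝ) + α) / 2) /
    (2 ^ (1 - α) * Real.pi ^ ((d : ℝ) / 2) * Real.Gamma (1 - α / 2))

/-- The weighted Gagliardo form `Γ_w[f]`, with values in `[0,∞]`. -/
noncomputable def gagliardoW (d : ℕ) (α : ℝ)
    (w f : EuclideanSpace ℝ (Fin d) → ℝ) : ℝ≥0∞ :=
  ENNReal.ofReal (Ada d α / 2) *
    ∫⁻ x, ∫⁻ y, ENNReal.ofReal ((f x - f y) ^ 2 * w x * w y / ‖x - y‖ ^ ((d : ℝ) + α))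

lemma ofReal_sq' {a : ℝ} (ha : 0 ≤ a) :
    ENNReal.ofReal (a ^ 2) = ENNReal.ofReal a ^ (2 : ℝ) := by
  rw [ENNReal.ofReal_pow ha, show (2 : ℝ) = ((2 : ℕ) : ℝ) by norm_num,
    ENNReal.rpow_natCast]

theorem stmt0 (d : ℕ) (hd : 1 ≤ d) (α : ℝ) (hα0 : 0 < α) (hα : α < min 2 (d : ℝ))
    (r : ℝ) (hr : 1 < r) (q : ℝ) (hq : q = (2 * r - 1) / r)
    (Ω : Set (EuclideanSpace ℝ (Fin d))) (hΩmeas : MeasurableSet Ω)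
    (hΩfin : volume Ω < ⊤)
    (w f S : EuclideanSpace ℝ (Fin d) → ℝ)
    (hw : Measurable w) (hf : Measurable f) (hS : Measurable S)
    (hw0 : ∀ x, 0 ≤ w x) (hf0 : ∀ x, 0 ≤ f x) (hS0 : ∀ x, 0 ≤ S x)
    (hwΩ : ∀ x ∉ Ω, w x = 0) (hfΩ : ∀ x ∉ Ω, f x = 0) (hSΩ : ∀ x ∉ Ω, S x = 0)
    (lam0 CS CH C0 : ℝ) (hlam : 0 < lam0) (hCS : 0 < CS) (hCH : 0 < CH) (hC0 : 0 < C0)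
    (B : ℝ≥0∞)
    (hB : B = gagliardoW d α w f + ∫⁻ x, ENNReal.ofReal (S x * f x ^ 2 * w x ^ 2))
    (hBfin : B < ⊤)
    (hSob : (∫⁻ x, ENNReal.ofReal ((w x * f x) ^ (2 * r))) ^ (1 / r)
        ≤ ENNReal.ofReal CS * B)
    (hL2 : (∫⁻ x, ENNReal.ofReal (f x ^ 2))
        ≤ ENNReal.ofReal (CH * C0) *
          (gagliardoW d α w f +
            ENNReal.ofReal lam0 * ∫⁻ x, ENNReal.ofReal (w x ^ 2 * f x ^ 2))) :
    (∫⁻ x, ENNReal.ofReal (f x ^ (2 * q) * w x ^ 2)) ^ (1 / q)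
      ≤ ENNReal.ofReal
          ((C0 * CH + CS) * (1 + lam0 * CS * (volume Ω).toReal ^ (1 - 1 / r))) * B := by
  have hr0 : (0 : ℝ) < r := lt_trans zero_lt_one hr
  have hr1 : (0 : ℝ) < r - 1 := sub_pos.2 hr
  have h2r1 : (0 : ℝ) < 2 * r - 1 := by linarith
  have hq0 : 0 < q := by rw [hq]; positivity
  set p : ℝ := r / (r - 1) with hp
  have hpq : p.HolderConjugate r :=
    ((Real.holderConjugate_iff_eq_conjExponent hr).2 hp).symm
  have hp0 : 0 < p := hpq.pos
  -- the basic ENNReal-valued functions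
  set u : EuclideanSpace ℝ (Fin d) → ℝ≥0∞ := fun x => ENNReal.ofReal (f x) with hu_def
  set v : EuclideanSpace ℝ (Fin d) → ℝ≥0∞ := fun x => ENNReal.ofReal (w x) with hv_def
  have hu : Measurable u := hf.ennreal_ofReal
  have hv : Measurable v := hw.ennreal_ofReal
  have he1 : (0 : ℝ) ≤ 2 - 2 / r := by
    have : 2 / r < 2 := by rw [div_lt_iff₀ hr0]; nlinarith
    linarith
  -- canonical integrals
  set X : ℝ≥0∞ := ∫⁻ x, u x ^ (2 : ℝ) with hX_def
  set Y2r : ℝ≥0∞ := ∫⁻ x, (v x * u x) ^ (2 * r) with hY2r_def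
  set Y : ℝ≥0∞ := Y2r ^ (1 / r) with hY_def
  set W : ℝ≥0∞ := ∫⁻ x, (v x * u x) ^ (2 : ℝ) with hW_def
  set L : ℝ≥0∞ := ∫⁻ x, u x ^ (2 * q) * v x ^ (2 : ℝ) with hL_def
  -- rewrite the hypotheses into canonical forms
  have hXeq : (∫⁻ x, ENNReal.ofReal (f x ^ 2)) = X := by
    refine lintegral_congr fun x => ?_
    exact ofReal_sq' (hf0 x)
  have huv : ∀ x, v x * u x = ENNReal.ofReal (w x * f x) :=
    fun x => (ENNReal.ofReal_mul (hw0 x)).symm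
  have hY2req : (∫⁻ x, ENNReal.ofReal ((w x * f x) ^ (2 * r))) = Y2r := by
    refine lintegral_congr fun x => ?_
    rw [huv x,
      ENNReal.ofReal_rpow_of_nonneg (mul_nonneg (hw0 x) (hf0 x)) (by positivity)]
  have hWeq : (∫⁻ x, ENNReal.ofReal (w x ^ 2 * f x ^ 2)) = W := by
    refine lintegral_congr fun x => ?_
    rw [huv x, ENNReal.ofReal_rpow_of_nonneg (mul_nonneg (hw0 x) (hf0 x))
      (by norm_num : (0:ℝ) ≤ 2)]
    congr 1
    rw [show (2:ℝ) = ((2:ℕ):ℝ) by norm_num, Real.rpow_natCast, mul_pow]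
  have hLeq : (∫⁻ x, ENNReal.ofReal (f x ^ (2 * q) * w x ^ 2)) = L := by
    refine lintegral_congr fun x => ?_
    rw [ENNReal.ofReal_mul (Real.rpow_nonneg (hf0 x) _)]
    congr 1
    · exact (ENNReal.ofReal_rpow_of_nonneg (hf0 x) (by linarith)).symm
    · exact ofReal_sq' (hw0 x)
  rw [hXeq] at hL2
  rw [hY2req] at hSob
  rw [hWeq] at hL2
  rw [hLeq]
  -- Hölder inequality 1 : L ≤ X^(1/p) * Y
  have holder1 : L ≤ X ^ (1 / p) * Y := by
    have key := ENNReal.lintegral_mul_le_Lp_mul_Lq volume hpq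
      ((ENNReal.continuous_rpow_const.measurable.comp hu :
        Measurable fun x => u x ^ (2 - 2/r)).aemeasurable)
      ((ENNReal.continuous_rpow_const.measurable.comp (hv.mul hu) :
        Measurable fun x => (v x * u x) ^ (2 : ℝ)).aemeasurable)
    simp only [Pi.mul_apply, Function.comp_apply] at key
    have e1 : (∫⁻ x, u x ^ (2 - 2/r) * (v x * u x) ^ (2:ℝ)) = L := by
      refine lintegral_congr fun x => ?_
      rw [ENNReal.mul_rpow_of_nonneg _ _ (by norm_num : (0:ℝ) ≤ 2)]
      have h2q : 2 * q = (2 - 2/r) + 2 := by rw [hq]; field_simp; ring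
      rw [h2q, ENNReal.rpow_add_of_nonneg _ _ he1 (by norm_num)]
      ring
    have e2 : (∫⁻ x, (u x ^ (2 - 2/r)) ^ p) = X := by
      refine lintegral_congr fun x => ?_
      rw [← ENNReal.rpow_mul]
      congr 1
      rw [hp]; field_simp
    have e3 : (∫⁻ x, ((v x * u x) ^ (2:ℝ)) ^ r) = Y2r := by
      refine lintegral_congr fun x => ?_
      rw [← ENNReal.rpow_mul]
    rw [e1, e2, e3] at key
    exact key
  -- Hölder inequality 2 : W ≤ (volume Ω)^(1/p) * Y
  have holder2 : W ≤ (volume Ω) ^ (1 / p) * Y := by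
    set I : EuclideanSpace ℝ (Fin d) → ℝ≥0∞ := Ω.indicator 1 with hI_def
    have hImeas : Measurable I := measurable_one.indicator hΩmeas
    have key := ENNReal.lintegral_mul_le_Lp_mul_Lq volume hpq hImeas.aemeasurable
      ((ENNReal.continuous_rpow_const.measurable.comp (hv.mul hu) :
        Measurable fun x => (v x * u x) ^ (2 : ℝ)).aemeasurable)
    simp only [Pi.mul_apply, Function.comp_apply] at key
    have e1 : (∫⁻ x, I x * (v x * u x) ^ (2:ℝ)) = W := by
      refine lintegral_congr fun x => ?_
      by_cases hx : x ∈ Ω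
      · rw [hI_def, Set.indicator_of_mem hx, Pi.one_apply, one_mul]
      · rw [hI_def, Set.indicator_of_notMem hx, zero_mul]
        have : u x = 0 := by rw [hu_def]; simp [hfΩ x hx]
        rw [this, mul_zero, ENNReal.zero_rpow_of_pos (by norm_num)]
    have e2 : (∫⁻ x, I x ^ p) = volume Ω := by
      have : (∫⁻ x, I x ^ p) = ∫⁻ x, I x := by
        refine lintegral_congr fun x => ?_
        by_cases hx : x ∈ Ω
        · rw [hI_def, Set.indicator_of_mem hx, Pi.one_apply, ENNReal.one_rpow]
        · rw [hI_def, Set.indicator_of_notMem hx,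
            ENNReal.zero_rpow_of_pos hp0]
      rw [this, hI_def, lintegral_indicator_one hΩmeas]
    have e3 : (∫⁻ x, ((v x * u x) ^ (2:ℝ)) ^ r) = Y2r := by
      refine lintegral_congr fun x => ?_
      rw [← ENNReal.rpow_mul]
    rw [e1, e2, e3] at key
    exact key
  -- basic bounds
  have hY_le : Y ≤ ENNReal.ofReal CS * B := hSob
  have hG_le : gagliardoW d α w f ≤ B := by rw [hB]; exact le_self_add
  -- volume term
  set m : ℝ := (volume Ω).toReal ^ (1 - 1 / r) with hm_def
  have hm0 : 0 ≤ m := by rw [hm_def]; positivity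
  have hvol : (volume Ω) ^ (1 / p) = ENNReal.ofReal m := by
    have h1p : 1 / p = 1 - 1 / r := by rw [hp]; field_simp
    have hexp : (0:ℝ) ≤ 1 - 1/r := by
      have : 1 / r < 1 := by rw [div_lt_one hr0]; linarith
      linarith
    rw [h1p, hm_def,
      ← ENNReal.ofReal_rpow_of_nonneg ENNReal.toReal_nonneg hexp,
      ENNReal.ofReal_toReal hΩfin.ne]
  -- bound X
  set A : ℝ := (C0 * CH + CS) * (1 + lam0 * CS * m) with hA_def
  have hA0 : 0 < A := by rw [hA_def]; positivity
  have hX_le : X ≤ ENNReal.ofReal A * B := by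
    calc X ≤ ENNReal.ofReal (CH * C0) * (gagliardoW d α w f + ENNReal.ofReal lam0 * W) := hL2
    _ ≤ ENNReal.ofReal (CH * C0) *
        (B + ENNReal.ofReal lam0 * (ENNReal.ofReal m * (ENNReal.ofReal CS * B))) := by
        gcongr
        calc W ≤ (volume Ω) ^ (1/p) * Y := holder2
        _ = ENNReal.ofReal m * Y := by rw [hvol]
        _ ≤ ENNReal.ofReal m * (ENNReal.ofReal CS * B) := by gcongr
    _ = ENNReal.ofReal (CH * C0 * (1 + lam0 * (m * CS))) * B := by
        rw [ENNReal.ofReal_mul (mul_nonneg hCH.le hC0.le),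
          ENNReal.ofReal_add zero_le_one (by positivity : (0:ℝ) ≤ lam0 * (m * CS)),
          ENNReal.ofReal_mul hlam.le, ENNReal.ofReal_mul hm0, ENNReal.ofReal_one]
        ring
    _ ≤ ENNReal.ofReal A * B := by
        gcongr
        rw [hA_def]
        nlinarith [mul_pos hC0 hCH, mul_nonneg (mul_nonneg hlam.le hCS.le) hm0]
  have hY_le' : Y ≤ ENNReal.ofReal A * B := by
    refine le_trans hY_le ?_
    gcongr
    rw [hA_def]
    nlinarith [mul_pos hC0 hCH, mul_nonneg (mul_nonneg hlam.le hCS.le) hm0]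
  -- final combination
  have hθσ : (1/p) * (1/q) + 1/q = 1 := by
    have h2r1' : 2 * r - 1 ≠ 0 := h2r1.ne'
    have hr0' : r ≠ 0 := hr0.ne'
    rw [hq, hp, one_div_div, one_div_div, div_mul_div_comm, mul_comm (r - 1) r,
      mul_div_mul_left _ _ hr0', ← add_div, show r - 1 + r = 2 * r - 1 by ring,
      div_self h2r1']
  calc L ^ (1/q) ≤ (X ^ (1/p) * Y) ^ (1/q) :=
        ENNReal.rpow_le_rpow holder1 (by positivity)
  _ = (X ^ (1/p)) ^ (1/q) * Y ^ (1/q) := by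
        rw [ENNReal.mul_rpow_of_nonneg _ _ (by positivity : (0:ℝ) ≤ 1/q)]
  _ = X ^ ((1/p) * (1/q)) * Y ^ (1/q) := by rw [← ENNReal.rpow_mul]
  _ ≤ (ENNReal.ofReal A * B) ^ ((1/p) * (1/q)) * (ENNReal.ofReal A * B) ^ (1/q) := by
        gcongr <;> positivity
  _ = (ENNReal.ofReal A * B) ^ ((1/p) * (1/q) + 1/q) := by
        rw [ENNReal.rpow_add_of_nonneg _ _ (by positivity) (by positivity)]
  _ = ENNReal.ofReal A * B := by rw [hθσ, ENNReal.rpow_one]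
end

section
/- Let μ be a finite measure on a measurable space X, let ρ : X → [0,∞) be measurable with ∫ ρ² dμ < ∞, and let q > 1 and M ≥ 1. Assume that for every natural number k, ( ∫ ρ^{2 q^{k+1}} dμ )^{1/q} ≤ M q^{2k} ∫ ρ^{2 q^{k}} dμ. Then the infinite product P := ∏_{k=0}^{∞} ( M q^{2k} )^{1/(2 q^{k})} is finite, and the essential supremum of ρ with respect to μ satisfies essSup_μ ρ ≤ P · ( ∫ ρ² dμ )^{1/2}. -/
open MeasureTheory ENNReal Filter Topology

private lemma stmt7_prod (q M : ℝ) (hq : 1 < q) (hM : 1 ≤ M) :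
    ∃ S : ℝ,
      HasProd (fun k : ℕ => ENNReal.ofReal ((M * q ^ (2 * k)) ^ (1 / (2 * q ^ k))))
        (ENNReal.ofReal (Real.exp S)) ∧
      ∀ n : ℕ, (∏ j ∈ Finset.range n,
          ENNReal.ofReal ((M * q ^ (2 * j)) ^ (1 / (2 * q ^ j))))
        ≤ ENNReal.ofReal (Real.exp S) := by
  have hq0 : (0:ℝ) < q := lt_trans one_pos hq
  have hM0 : (0:ℝ) < M := lt_of_lt_of_le one_pos hM
  set a : ℕ → ℝ := fun k => (M * q ^ (2 * k)) ^ (1 / (2 * q ^ k)) with ha_def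
  have hbase_pos : ∀ k : ℕ, (0:ℝ) < M * q ^ (2 * k) := fun k => by positivity
  have hbase_one : ∀ k : ℕ, (1:ℝ) ≤ M * q ^ (2 * k) := fun k =>
    one_le_mul_of_one_le_of_one_le hM (one_le_pow₀ hq.le)
  have ha_one : ∀ k, 1 ≤ a k := fun k =>
    Real.one_le_rpow (hbase_one k) (by positivity)
  have ha_pos : ∀ k, 0 < a k := fun k => lt_of_lt_of_le one_pos (ha_one k)
  set b : ℕ → ℝ := fun k => Real.log (a k) with hb_def
  have hb_nonneg : ∀ k, 0 ≤ b k := fun k => Real.log_nonneg (ha_one k)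
  have hb_eq : ∀ k, b k =
      (Real.log M / 2) * q⁻¹ ^ k + Real.log q * ((k:ℝ) * q⁻¹ ^ k) := by
    intro k
    have hqk : (q:ℝ) ^ k ≠ 0 := by positivity
    have h1 : b k = (1 / (2 * q ^ k)) * Real.log (M * q ^ (2 * k)) := by
      simp only [hb_def, ha_def]
      rw [Real.log_rpow (hbase_pos k)]
    rw [h1, Real.log_mul (ne_of_gt hM0) (by positivity), Real.log_pow]
    rw [inv_pow]
    push_cast
    field_simp
  have hr0 : (0:ℝ) ≤ q⁻¹ := by positivity
  have hr1 : q⁻¹ < 1 := inv_lt_one_of_one_lt₀ hq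
  have hsum1 : Summable (fun k : ℕ => q⁻¹ ^ k) := summable_geometric_of_lt_one hr0 hr1
  have hsum2 : Summable (fun k : ℕ => (k:ℝ) * q⁻¹ ^ k) := by
    have := summable_pow_mul_geometric_of_norm_lt_one (R := ℝ) 1 (r := q⁻¹)
      (by rwa [Real.norm_eq_abs, abs_of_nonneg hr0])
    simpa using this
  have hb_summ : Summable b := by
    rw [funext hb_eq]
    exact (hsum1.mul_left _).add (hsum2.mul_left _)
  refine ⟨∑' k, b k, ?_, ?_⟩
  · have hbS : HasSum b (∑' k, b k) := hb_summ.hasSum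
    have hexp : HasProd (fun k => Real.exp (b k)) (Real.exp (∑' k, b k)) := by
      have h := (Real.continuous_exp.tendsto (∑' k, b k)).comp hbS
      exact h.congr fun s => Real.exp_sum s b
    have haexp : ∀ k, Real.exp (b k) = a k := fun k => Real.exp_log (ha_pos k)
    have hPa : HasProd a (Real.exp (∑' k, b k)) := by
      rw [← funext haexp]; exact hexp
    have h := (ENNReal.continuous_ofReal.tendsto (Real.exp (∑' k, b k))).comp hPa
    exact h.congr fun s => ENNReal.ofReal_prod_of_nonneg fun i _ => (ha_pos i).le
  · intro n
    rw [← ENNReal.ofReal_prod_of_nonneg fun i _ => (ha_pos i).le]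
    apply ENNReal.ofReal_le_ofReal
    have haexp : ∀ k, Real.exp (b k) = a k := fun k => Real.exp_log (ha_pos k)
    have h : ∏ j ∈ Finset.range n, a j = Real.exp (∑ j ∈ Finset.range n, b j) := by
      rw [Real.exp_sum]
      exact (Finset.prod_congr rfl fun j _ => (haexp j).symm)
    rw [h]
    exact Real.exp_le_exp.2 (hb_summ.sum_le_tsum _ (fun i _ => hb_nonneg i))

theorem stmt7 {X : Type*} [MeasurableSpace X] (mu : Measure X) [IsFiniteMeasure mu]
    (rho : X → ℝ) (hrhom : Measurable rho) (hrho0 : ∀ x, 0 ≤ rho x)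
    (hL2 : (∫⁻ x, ENNReal.ofReal (rho x ^ 2) ∂mu) < ⊤)
    (q M : ℝ) (hq : 1 < q) (hM : 1 ≤ M)
    (hiter : ∀ k : ℕ,
      (∫⁻ x, ENNReal.ofReal (rho x ^ (2 * q ^ (k + 1))) ∂mu) ^ (1 / q)
        ≤ ENNReal.ofReal (M * q ^ (2 * k)) *
            ∫⁻ x, ENNReal.ofReal (rho x ^ (2 * q ^ k)) ∂mu) :
    (∏' k : ℕ, ENNReal.ofReal ((M * q ^ (2 * k)) ^ (1 / (2 * q ^ k)))) ≠ ⊤ ∧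
    essSup (fun x => ENNReal.ofReal (rho x)) mu
      ≤ (∏' k : ℕ, ENNReal.ofReal ((M * q ^ (2 * k)) ^ (1 / (2 * q ^ k)))) *
          (∫⁻ x, ENNReal.ofReal (rho x ^ 2) ∂mu) ^ ((1 : ℝ) / 2) := by
  have hq0 : (0:ℝ) < q := lt_trans one_pos hq
  obtain ⟨S, hP, hpartial⟩ := stmt7_prod q M hq hM
  have hPt : (∏' k : ℕ, ENNReal.ofReal ((M * q ^ (2 * k)) ^ (1 / (2 * q ^ k))))
      = ENNReal.ofReal (Real.exp S) := hP.tprod_eq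
  -- abbreviations
  have hpk_pos : ∀ k : ℕ, (0:ℝ) < 2 * q ^ k := fun k => by positivity
  have hbase_pos : ∀ k : ℕ, (0:ℝ) < M * q ^ (2 * k) := fun k => by positivity
  -- A k as integral of (ofReal rho) ^ (2 q^k)
  have hAf : ∀ k : ℕ, (∫⁻ x, ENNReal.ofReal (rho x ^ (2 * q ^ k)) ∂mu)
      = ∫⁻ x, (ENNReal.ofReal (rho x)) ^ (2 * q ^ k) ∂mu := by
    intro k
    refine lintegral_congr fun x => ?_
    exact (ENNReal.ofReal_rpow_of_nonneg (hrho0 x) (hpk_pos k).le).symm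
  have hA0 : (∫⁻ x, ENNReal.ofReal (rho x ^ (2 * q ^ (0:ℕ))) ∂mu)
      = ∫⁻ x, ENNReal.ofReal (rho x ^ 2) ∂mu := by
    refine lintegral_congr fun x => ?_
    congr 1
    rw [show (2 * q ^ (0:ℕ) : ℝ) = ((2:ℕ):ℝ) by norm_num, Real.rpow_natCast]
  -- Step 1: iteration inequality raised to power q
  have hA1 : ∀ k : ℕ, (∫⁻ x, ENNReal.ofReal (rho x ^ (2 * q ^ (k+1))) ∂mu)
      ≤ (ENNReal.ofReal (M * q ^ (2 * k)) *
          ∫⁻ x, ENNReal.ofReal (rho x ^ (2 * q ^ k)) ∂mu) ^ q := by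
    intro k
    have h2 := ENNReal.rpow_le_rpow (hiter k) hq0.le
    rwa [← ENNReal.rpow_mul, one_div, inv_mul_cancel₀ (ne_of_gt hq0),
      ENNReal.rpow_one] at h2
  -- Step 2: one-step bound for normalized quantities
  have hB : ∀ k : ℕ,
      (∫⁻ x, ENNReal.ofReal (rho x ^ (2 * q ^ (k+1))) ∂mu) ^ (1/(2*q^(k+1)))
        ≤ ENNReal.ofReal ((M * q ^ (2 * k)) ^ (1 / (2 * q ^ k))) *
          (∫⁻ x, ENNReal.ofReal (rho x ^ (2 * q ^ k)) ∂mu) ^ (1/(2*q^k)) := by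
    intro k
    have hqe : q * (1/(2*q^(k+1))) = 1/(2*q^k) := by
      have hqk : (q:ℝ) ^ k ≠ 0 := by positivity
      rw [pow_succ]
      field_simp
    calc (∫⁻ x, ENNReal.ofReal (rho x ^ (2 * q ^ (k+1))) ∂mu) ^ (1/(2*q^(k+1)))
        ≤ ((ENNReal.ofReal (M * q ^ (2 * k)) *
            ∫⁻ x, ENNReal.ofReal (rho x ^ (2 * q ^ k)) ∂mu) ^ q) ^ (1/(2*q^(k+1))) :=
          ENNReal.rpow_le_rpow (hA1 k) (by positivity)
      _ = (ENNReal.ofReal (M * q ^ (2 * k)) *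
            ∫⁻ x, ENNReal.ofReal (rho x ^ (2 * q ^ k)) ∂mu) ^ (1/(2*q^k)) := by
          rw [← ENNReal.rpow_mul, hqe]
      _ = ENNReal.ofReal (M * q ^ (2 * k)) ^ (1/(2*q^k)) *
            (∫⁻ x, ENNReal.ofReal (rho x ^ (2 * q ^ k)) ∂mu) ^ (1/(2*q^k)) :=
          ENNReal.mul_rpow_of_nonneg _ _ (by positivity)
      _ = ENNReal.ofReal ((M * q ^ (2 * k)) ^ (1 / (2 * q ^ k))) *
            (∫⁻ x, ENNReal.ofReal (rho x ^ (2 * q ^ k)) ∂mu) ^ (1/(2*q^k)) := by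
          rw [ENNReal.ofReal_rpow_of_pos (hbase_pos k)]
  -- Step 3: induction
  have hBk : ∀ k : ℕ,
      (∫⁻ x, ENNReal.ofReal (rho x ^ (2 * q ^ k)) ∂mu) ^ (1/(2*q^k))
        ≤ (∏ j ∈ Finset.range k, ENNReal.ofReal ((M * q ^ (2 * j)) ^ (1 / (2 * q ^ j)))) *
          (∫⁻ x, ENNReal.ofReal (rho x ^ (2 * q ^ (0:ℕ))) ∂mu) ^ (1/(2*q^(0:ℕ))) := by
    intro k
    induction k with
    | zero => simp
    | succ n ih =>
      calc (∫⁻ x, ENNReal.ofReal (rho x ^ (2 * q ^ (n+1))) ∂mu) ^ (1/(2*q^(n+1)))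
          ≤ ENNReal.ofReal ((M * q ^ (2 * n)) ^ (1 / (2 * q ^ n))) *
            (∫⁻ x, ENNReal.ofReal (rho x ^ (2 * q ^ n)) ∂mu) ^ (1/(2*q^n)) := hB n
        _ ≤ ENNReal.ofReal ((M * q ^ (2 * n)) ^ (1 / (2 * q ^ n))) *
            ((∏ j ∈ Finset.range n,
                ENNReal.ofReal ((M * q ^ (2 * j)) ^ (1 / (2 * q ^ j)))) *
              (∫⁻ x, ENNReal.ofReal (rho x ^ (2 * q ^ (0:ℕ))) ∂mu) ^ (1/(2*q^(0:ℕ)))) :=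
            mul_le_mul_right ih _
        _ = (∏ j ∈ Finset.range (n+1),
              ENNReal.ofReal ((M * q ^ (2 * j)) ^ (1 / (2 * q ^ j)))) *
            (∫⁻ x, ENNReal.ofReal (rho x ^ (2 * q ^ (0:ℕ))) ∂mu) ^ (1/(2*q^(0:ℕ))) := by
            rw [Finset.prod_range_succ]; ring
  -- uniform bound
  have hBle : ∀ k : ℕ,
      (∫⁻ x, ENNReal.ofReal (rho x ^ (2 * q ^ k)) ∂mu) ^ (1/(2*q^k))
        ≤ ENNReal.ofReal (Real.exp S) *
          (∫⁻ x, ENNReal.ofReal (rho x ^ 2) ∂mu) ^ ((1:ℝ)/2) := by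
    intro k
    refine (hBk k).trans ?_
    rw [hA0]
    have he : (1/(2*q^(0:ℕ)) : ℝ) = (1:ℝ)/2 := by norm_num
    rw [he]
    exact mul_le_mul_left (hpartial k) _
  refine ⟨by rw [hPt]; exact ENNReal.ofReal_ne_top, ?_⟩
  rw [hPt]
  -- now prove the essSup bound
  by_contra hc
  push_neg at hc
  obtain ⟨t, hLt, hts⟩ := exists_between hc
  set E : Set X := {x | t < ENNReal.ofReal (rho x)} with hE_def
  have hEmeas : MeasurableSet E := measurableSet_lt measurable_const hrhom.ennreal_ofReal
  have hE0 : mu E ≠ 0 := by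
    intro h0
    have hae : (fun x => ENNReal.ofReal (rho x)) ≤ᵐ[mu] fun _ => t := by
      rw [Filter.EventuallyLE, ae_iff]
      simpa [hE_def, not_le] using h0
    exact absurd (essSup_le_of_ae_le t hae) (not_le.2 hts)
  have hEtop : mu E ≠ ⊤ := measure_ne_top mu E
  -- lower bound for each k
  have hlow : ∀ k : ℕ, t * (mu E) ^ (1/(2*q^k))
      ≤ (∫⁻ x, ENNReal.ofReal (rho x ^ (2 * q ^ k)) ∂mu) ^ (1/(2*q^k)) := by
    intro k
    have h1 : t ^ (2*q^k) * mu E ≤ ∫⁻ x, ENNReal.ofReal (rho x ^ (2 * q ^ k)) ∂mu := by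
      rw [hAf k]
      calc t ^ (2*q^k) * mu E = ∫⁻ _ in E, t ^ (2*q^k) ∂mu := (setLIntegral_const _ _).symm
        _ ≤ ∫⁻ x in E, (ENNReal.ofReal (rho x)) ^ (2*q^k) ∂mu :=
            setLIntegral_mono' hEmeas fun x hx =>
              ENNReal.rpow_le_rpow (le_of_lt hx) (hpk_pos k).le
        _ ≤ ∫⁻ x, (ENNReal.ofReal (rho x)) ^ (2*q^k) ∂mu := setLIntegral_le_lintegral _ _
    have h2 := ENNReal.rpow_le_rpow h1 (le_of_lt (by positivity : (0:ℝ) < 1/(2*q^k)))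
    rwa [ENNReal.mul_rpow_of_nonneg _ _ (by positivity), ← ENNReal.rpow_mul,
      mul_one_div, div_self (ne_of_gt (hpk_pos k)), ENNReal.rpow_one] at h2
  have ht : ∀ k : ℕ, t * (mu E) ^ (1/(2*q^k))
      ≤ ENNReal.ofReal (Real.exp S) *
        (∫⁻ x, ENNReal.ofReal (rho x ^ 2) ∂mu) ^ ((1:ℝ)/2) :=
    fun k => (hlow k).trans (hBle k)
  -- limit
  have hmt : 0 < (mu E).toReal := ENNReal.toReal_pos hE0 hEtop
  have hrt : Tendsto (fun k : ℕ => 1/(2*q^k)) atTop (𝓝 (0:ℝ)) := by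
    have h1 : Tendsto (fun k : ℕ => (2:ℝ) * q ^ k) atTop atTop :=
      (tendsto_pow_atTop_atTop_of_one_lt hq).const_mul_atTop two_pos
    exact h1.inv_tendsto_atTop.congr fun k => by simp [one_div]
  have hreal : Tendsto (fun k : ℕ => (mu E).toReal ^ (1/(2*q^k))) atTop (𝓝 1) := by
    have hcont : ContinuousAt ((mu E).toReal ^ · : ℝ → ℝ) 0 :=
      Real.continuousAt_const_rpow (ne_of_gt hmt)
    have := hcont.tendsto.comp hrt
    simpa [Real.rpow_zero, Function.comp_def] using this
  have henn : Tendsto (fun k : ℕ => (mu E) ^ (1/(2*q^k))) atTop (𝓝 1) := by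
    have h2 := (ENNReal.continuous_ofReal.tendsto 1).comp hreal
    have h3 : ∀ k : ℕ, ENNReal.ofReal ((mu E).toReal ^ (1/(2*q^k)))
        = (mu E) ^ (1/(2*q^k)) := fun k => by
      rw [← ENNReal.ofReal_rpow_of_pos hmt, ENNReal.ofReal_toReal hEtop]
    simpa [ENNReal.ofReal_one] using h2.congr h3
  have hfin : Tendsto (fun k : ℕ => t * (mu E) ^ (1/(2*q^k))) atTop (𝓝 t) := by
    have := ENNReal.Tendsto.const_mul (a := t) henn (Or.inl one_ne_zero)
    simpa using this
  have hle : t ≤ ENNReal.ofReal (Real.exp S) *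
      (∫⁻ x, ENNReal.ofReal (rho x ^ 2) ∂mu) ^ ((1:ℝ)/2) :=
    le_of_tendsto hfin (Filter.Eventually.of_forall ht)
  exact absurd hle (not_le.2 hLt)
end

section
/- For all real numbers a, b ≥ 0 and every natural number j ≥ 1, one has ( a^j − b^j )² ≤ j (a − b) ( a^{2j−1} − b^{2j−1} ). -/
open Finset in
theorem stmt13 (a b : ℝ) (ha : 0 ≤ a) (hb : 0 ≤ b) (j : ℕ) (hj : 1 ≤ j) :
    (a ^ j - b ^ j) ^ 2 ≤ (j : ℝ) * (a - b) * (a ^ (2 * j - 1) - b ^ (2 * j - 1)) := by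
  have h1 : a ^ j - b ^ j = (∑ i ∈ range j, a ^ i * b ^ (j - 1 - i)) * (a - b) :=
    (geom_sum₂_mul a b j).symm
  have h2 : a ^ (2 * j - 1) - b ^ (2 * j - 1) =
      (∑ i ∈ range (2 * j - 1), a ^ i * b ^ (2 * j - 1 - 1 - i)) * (a - b) :=
    (geom_sum₂_mul a b (2 * j - 1)).symm
  have key : (∑ i ∈ range j, a ^ i * b ^ (j - 1 - i)) ^ 2 ≤
      (j : ℝ) * ∑ i ∈ range (2 * j - 1), a ^ i * b ^ (2 * j - 1 - 1 - i) := by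
    calc (∑ i ∈ range j, a ^ i * b ^ (j - 1 - i)) ^ 2
        ≤ (range j).card * ∑ i ∈ range j, (a ^ i * b ^ (j - 1 - i)) ^ 2 :=
          sq_sum_le_card_mul_sum_sq
      _ = (j : ℝ) * ∑ i ∈ range j, a ^ (2 * i) * b ^ (2 * j - 1 - 1 - 2 * i) := by
          rw [card_range]
          congr 1
          refine Finset.sum_congr rfl fun i hi => ?_
          have hij : i < j := mem_range.mp hi
          rw [mul_pow, ← pow_mul, ← pow_mul]
          congr 2 <;> omega
      _ ≤ (j : ℝ) * ∑ i ∈ range (2 * j - 1), a ^ i * b ^ (2 * j - 1 - 1 - i) := by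
          apply mul_le_mul_of_nonneg_left _ (Nat.cast_nonneg j)
          have himg : ∑ i ∈ range j, a ^ (2 * i) * b ^ (2 * j - 1 - 1 - 2 * i) =
              ∑ k ∈ (range j).image (2 * ·), a ^ k * b ^ (2 * j - 1 - 1 - k) := by
            rw [Finset.sum_image (by intro x _ y _ h; simp only at h; omega)]
          rw [himg]
          apply Finset.sum_le_sum_of_subset_of_nonneg
          · intro k hk
            simp only [mem_image, mem_range] at hk ⊢
            omega
          · intro k _ _
            positivity
  calc (a ^ j - b ^ j) ^ 2
      = (∑ i ∈ range j, a ^ i * b ^ (j - 1 - i)) ^ 2 * (a - b) ^ 2 := by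
        rw [h1, mul_pow]
    _ ≤ ((j : ℝ) * ∑ i ∈ range (2 * j - 1), a ^ i * b ^ (2 * j - 1 - 1 - i)) * (a - b) ^ 2 :=
        mul_le_mul_of_nonneg_right key (sq_nonneg _)
    _ = (j : ℝ) * (a - b) * (a ^ (2 * j - 1) - b ^ (2 * j - 1)) := by
        rw [h2]; ring
end
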